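/- Let G be a group equipped with the subgroup topology determined by a neighbourhood family Σ. Then G with this topology is a topological group if and only if every right translation map r_t : G → G, r_t(g) = gt (t ∈ G), is continuous. -/

import Mathlib

open TopologicalSpace
open scoped Topology Pointwise

/-- The collection of all left cosets `g • H` of members of a family of subgroups. -/
def leftCosets {G : Type*} [Group G] (Sig : Set (Subgroup G)) : Set (Set G) :=
  {s | ∃ g : G, ∃ H ∈ Sig, s = g • (H : Set G)}

/-- A neighbourhood family on a group `G`: a (nonempty) collection of subgroups such that any two
members contain a common member. -/
def IsNbhdFamily {G : Type*} [Group G] (Sig : Set (Subgroup G)) : Prop :=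
  Sig.Nonempty ∧ ∀ H ∈ Sig, ∀ K ∈ Sig, ∃ S ∈ Sig, S ≤ H ⊓ K

/-- The subgroup topology on `G` determined by the family `Sig`: the topology generated by all
left cosets of members of `Sig`. -/
def subgroupTopology {G : Type*} [Group G] (Sig : Set (Subgroup G)) : TopologicalSpace G :=
  generateFrom (leftCosets Sig)

lemma isOpen_coset' {G : Type*} [Group G] (Sig : Set (Subgroup G)) (g : G) {H : Subgroup G}
    (hH : H ∈ Sig) : IsOpen[subgroupTopology Sig] (g • (H : Set G)) :=
  TopologicalSpace.isOpen_generateFrom_of_mem ⟨g, H, hH, rfl⟩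

lemma continuous_left_mul' {G : Type*} [Group G] (Sig : Set (Subgroup G)) (a : G) :
    Continuous[subgroupTopology Sig, subgroupTopology Sig] (fun z : G => a * z) := by
  apply continuous_generateFrom_iff.mpr
  rintro s ⟨g, H, hH, rfl⟩
  convert isOpen_coset' Sig (a⁻¹ * g) hH using 1
  ext z
  simp only [Set.mem_preimage, Set.mem_smul_set_iff_inv_smul_mem, smul_eq_mul, mul_inv_rev,
    inv_inv, mul_assoc]

/-- `G` with the subgroup topology is a topological group iff every right
translation map `g ↦ g * t` is continuous. -/
theorem statement6 {G : Type*} [Group G] (Sig : Set (Subgroup G)) (hSig : IsNbhdFamily Sig) :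
    @IsTopologicalGroup G (subgroupTopology Sig) _ ↔
      ∀ t : G, Continuous[subgroupTopology Sig, subgroupTopology Sig] (fun g : G => g * t) := by
  letI := subgroupTopology Sig
  constructor
  · intro h t
    exact continuous_mul_right t
  · intro hr
    have hHopen : ∀ {H : Subgroup G}, H ∈ Sig → IsOpen (H : Set G) := by
      intro H hH
      simpa using isOpen_coset' Sig 1 hH
    refine { continuous_mul := ?_, continuous_inv := ?_ }
    · apply continuous_generateFrom_iff.mpr
      rintro s ⟨g, H, hH, rfl⟩
      rw [isOpen_prod_iff]
      intro a b hab
      rw [Set.mem_preimage, Set.mem_smul_set_iff_inv_smul_mem, smul_eq_mul] at hab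
      refine ⟨(fun z : G => (a * b)⁻¹ * (z * b)) ⁻¹' (H : Set G), b • (H : Set G),
        ?_, isOpen_coset' Sig b hH, ?_, ?_, ?_⟩
      · exact ((continuous_left_mul' Sig (a * b)⁻¹).comp (hr b)).isOpen_preimage _ (hHopen hH)
      · show (a * b)⁻¹ * (a * b) ∈ (H : Set G)
        rw [inv_mul_cancel]
        exact H.one_mem
      · exact ⟨1, H.one_mem, by simp⟩
      · rintro ⟨z, w⟩ ⟨hz, hw⟩
        rw [Set.mem_preimage] at hz
        rw [Set.mem_smul_set_iff_inv_smul_mem, smul_eq_mul] at hw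
        rw [Set.mem_preimage, Set.mem_smul_set_iff_inv_smul_mem, smul_eq_mul]
        have key : g⁻¹ * (z * w) = (g⁻¹ * (a * b)) * ((a * b)⁻¹ * (z * b)) * (b⁻¹ * w) := by
          group
        rw [key]
        exact mul_mem (mul_mem hab hz) hw
    · apply continuous_generateFrom_iff.mpr
      rintro s ⟨g, H, hH, rfl⟩
      have : (fun x : G => x⁻¹) ⁻¹' (g • (H : Set G)) = (fun x : G => x * g) ⁻¹' (H : Set G) := by
        ext x
        rw [Set.mem_preimage, Set.mem_smul_set_iff_inv_smul_mem, smul_eq_mul, Set.mem_preimage]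
        constructor
        · intro h
          simpa [mul_inv_rev] using H.inv_mem h
        · intro h
          simpa [mul_inv_rev] using H.inv_mem h
      rw [this]
      exact (hr g).isOpen_preimage _ (hHopen hH)
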